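/- arXiv:math/0205259 — 2 statements merged into one kernel-verified Lean document; each statement's English description precedes it below -/
import Mathlib

section
/- Let ρ : G → ℂ be continuous and dν(x) = ρ(x)dx where dx is left Haar measure on G. Then ν satisfies ∫_G f(k⁻¹xh⁻¹) dν(x) = Δ_K(k)Δ_H(h) ∫_G f dν for all k ∈ K, h ∈ H, f ∈ C_c(G) if and only if ρ(kxh) = ρ(x) Δ_K(k)Δ_H(h)/Δ_G(h) for all k ∈ K, h ∈ H, x ∈ G. -/
open MeasureTheory Topology

noncomputable section

/-- `Δ` is the modular function of the measure `μ`: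
`∫ f(x k₀) dμ(x) = Δ(k₀)⁻¹ ∫ f dμ` for all `f ∈ C_c`. -/
def IsModularFunction {X : Type*} [Group X] [TopologicalSpace X] [MeasurableSpace X]
    (μ : Measure X) (Δ : X → ℝ) : Prop :=
  ∀ x₀ : X, ∀ f : X → ℝ, Continuous f → HasCompactSupport f →
    ∫ x, f (x * x₀) ∂μ = (Δ x₀)⁻¹ * ∫ x, f x ∂μ

section Aux

variable {G : Type*} [Group G] [TopologicalSpace G] [IsTopologicalGroup G] [LocallyCompactSpace G]
    [MeasurableSpace G] [BorelSpace G]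
    (μG : Measure G) [μG.IsHaarMeasure] (ΔG : G → ℝ) (hΔG : IsModularFunction μG ΔG)

include hΔG in
/-- Modular function never vanishes. -/
theorem aux_modular_ne_zero (x₀ : G) : ΔG x₀ ≠ 0 := by
  obtain ⟨g, gc, gnn, g1⟩ := exists_continuous_nonneg_pos (1 : G)
  have key := hΔG x₀ g g.continuous gc
  have hcs : HasCompactSupport fun x => g (x * x₀) :=
    gc.comp_homeomorph (Homeomorph.mulRight x₀)
  have hct : Continuous fun x => g (x * x₀) := g.continuous.comp (continuous_mul_right x₀)
  have hpos : 0 < ∫ x, g (x * x₀) ∂μG := by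
    rw [integral_pos_iff_support_of_nonneg (f := fun x => g (x * x₀)) (μ := μG)
      (fun x => gnn (x * x₀)) (hct.integrable_of_hasCompactSupport hcs)]
    have : IsOpen (Function.support fun x => g (x * x₀)) := by
      have heq : (Function.support fun x => g (x * x₀))
          = (fun x => g (x * x₀)) ⁻¹' {0}ᶜ := by
        ext x; simp [Function.mem_support]
      rw [heq]
      exact isOpen_compl_singleton.preimage hct
    refine this.measure_pos μG ⟨x₀⁻¹, ?_⟩
    simpa [Function.mem_support] using g1
  intro h0
  rw [key, h0] at hpos
  simp at hpos

include hΔG in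
/-- Complex version of the modular function property. -/
theorem aux_modular_complex (x₀ : G) (f : G → ℂ) (hf : Continuous f)
    (hfc : HasCompactSupport f) :
    ∫ x, f (x * x₀) ∂μG = ((ΔG x₀ : ℂ))⁻¹ * ∫ x, f x ∂μG := by
  have hint : Integrable f μG := hf.integrable_of_hasCompactSupport hfc
  have hcs : HasCompactSupport fun x => f (x * x₀) :=
    hfc.comp_homeomorph (Homeomorph.mulRight x₀)
  have hct : Continuous fun x => f (x * x₀) := hf.comp (continuous_mul_right x₀)
  have hint' : Integrable (fun x => f (x * x₀)) μG :=
    hct.integrable_of_hasCompactSupport hcs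
  have hre := hΔG x₀ (fun x => (f x).re) (Complex.continuous_re.comp hf)
    (hfc.comp_left rfl)
  have him := hΔG x₀ (fun x => (f x).im) (Complex.continuous_im.comp hf)
    (hfc.comp_left rfl)
  apply Complex.ext
  · have h1 := integral_re hint'
    have h2 := integral_re hint
    simp only [RCLike.re_to_complex] at h1 h2
    rw [← Complex.ofReal_inv, Complex.re_ofReal_mul, ← h2, ← h1]
    simpa using hre
  · have h1 := integral_im hint'
    have h2 := integral_im hint
    simp only [RCLike.im_to_complex] at h1 h2
    rw [← Complex.ofReal_inv, Complex.im_ofReal_mul, ← h2, ← h1]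
    simpa using him

include hΔG in
/-- Inverse right-translation version. -/
theorem aux_modular_complex_inv (x₀ : G) (f : G → ℂ) (hf : Continuous f)
    (hfc : HasCompactSupport f) :
    ∫ x, f (x * x₀⁻¹) ∂μG = (ΔG x₀ : ℂ) * ∫ x, f x ∂μG := by
  have h1 := aux_modular_complex μG ΔG hΔG x₀ (fun x => f (x * x₀⁻¹))
    (hf.comp (continuous_mul_right x₀⁻¹))
    (hfc.comp_homeomorph (Homeomorph.mulRight x₀⁻¹))
  simp only [mul_inv_cancel_right] at h1
  have hne : (ΔG x₀ : ℂ) ≠ 0 :=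
    Complex.ofReal_ne_zero.mpr (aux_modular_ne_zero μG ΔG hΔG x₀)
  rw [h1, ← mul_assoc, mul_inv_cancel₀ hne, one_mul]

/-- A continuous function orthogonal to all `C_c` functions vanishes. -/
theorem aux_vanish (g : G → ℂ) (hg : Continuous g)
    (hint : ∀ f : G → ℂ, Continuous f → HasCompactSupport f → ∫ x, f x * g x ∂μG = 0)
    (x₀ : G) : g x₀ = 0 := by
  obtain ⟨φ, φc, φnn, φx⟩ := exists_continuous_nonneg_pos x₀
  have hf : Continuous fun x => (φ x : ℂ) * (starRingEnd ℂ) (g x) :=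
    (Complex.continuous_ofReal.comp φ.continuous).mul (Complex.continuous_conj.comp hg)
  have hfc : HasCompactSupport fun x => (φ x : ℂ) * (starRingEnd ℂ) (g x) := by
    apply HasCompactSupport.mul_right
    exact (φc.comp_left Complex.ofReal_zero).mono (by simp [Function.support_subset_iff])
  have key := hint _ hf hfc
  have heq : (fun x => ((φ x : ℂ) * (starRingEnd ℂ) (g x)) * g x)
      = fun x => ((φ x * Complex.normSq (g x) : ℝ) : ℂ) := by
    funext x
    push_cast
    rw [mul_assoc, mul_comm ((starRingEnd ℂ) (g x)), Complex.mul_conj]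
  rw [heq] at key
  have hcont : Continuous fun x => φ x * Complex.normSq (g x) :=
    φ.continuous.mul (Complex.continuous_normSq.comp hg)
  have hcs : HasCompactSupport fun x => φ x * Complex.normSq (g x) :=
    φc.mul_right
  have hintg : Integrable (fun x => φ x * Complex.normSq (g x)) μG :=
    hcont.integrable_of_hasCompactSupport hcs
  have hreal : ∫ x, φ x * Complex.normSq (g x) ∂μG = 0 := by
    have h5 := integral_re (μ := μG)
      (f := fun x => ((φ x * Complex.normSq (g x) : ℝ) : ℂ)) hintg.ofReal
    simp only [RCLike.re_to_complex, Complex.ofReal_re] at h5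
    rw [h5, key, Complex.zero_re]
  have hnn : 0 ≤ fun x => φ x * Complex.normSq (g x) := by
    intro x
    exact mul_nonneg (φnn x) (Complex.normSq_nonneg _)
  have hae := (integral_eq_zero_iff_of_nonneg hnn hintg).mp hreal
  have hzero : (fun x => φ x * Complex.normSq (g x)) = 0 :=
    (hcont.ae_eq_iff_eq μG continuous_const).mp hae
  have := congrFun hzero x₀
  simp only [Pi.zero_apply, mul_eq_zero] at this
  rcases this with h | h
  · exact absurd h φx
  · exact Complex.normSq_eq_zero.mp h

include hΔG in
/-- Key change of variables. -/
theorem aux_transform (ρ : G → ℂ) (hρ : Continuous ρ) (k h : G) (f : G → ℂ)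
    (hf : Continuous f) (hfc : HasCompactSupport f) :
    ∫ x, f (k⁻¹ * x * h⁻¹) * ρ x ∂μG = (ΔG h : ℂ) * ∫ x, f x * ρ (k * x * h) ∂μG := by
  have step1 : ∫ x, f (k⁻¹ * x * h⁻¹) * ρ x ∂μG
      = ∫ x, f (x * h⁻¹) * ρ (k * x) ∂μG := by
    rw [← integral_mul_left_eq_self (μ := μG) (fun x => f (k⁻¹ * x * h⁻¹) * ρ x) k]
    simp [mul_assoc]
  rw [step1]
  have hΦc : Continuous fun x => f x * ρ (k * x * h) :=
    hf.mul (hρ.comp ((continuous_mul_left k).mul continuous_const))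
  have hΦcs : HasCompactSupport fun x => f x * ρ (k * x * h) := hfc.mul_right
  have := aux_modular_complex_inv μG ΔG hΔG h (fun x => f x * ρ (k * x * h)) hΦc hΦcs
  rw [← this]
  congr 1
  funext x
  simp [mul_assoc]

end Aux

/-- A continuous `ρ : G → ℂ` makes `dν = ρ dx` satisfy the relative invariance condition
`∫ f(k⁻¹xh⁻¹) dν = Δ_K(k)Δ_H(h) ∫ f dν` iff `ρ(kxh) = ρ(x)Δ_K(k)Δ_H(h)/Δ_G(h)`
(generalized Bruhat function). -/
theorem bruhat_function_iff
    {G : Type*} [Group G] [TopologicalSpace G] [IsTopologicalGroup G] [LocallyCompactSpace G]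
    [MeasurableSpace G] [BorelSpace G]
    (K H : Subgroup G) (hK : IsClosed (K : Set G)) (hH : IsClosed (H : Set G))
    (μG : Measure G) [μG.IsHaarMeasure]
    (νK : Measure K) [νK.IsHaarMeasure] (νH : Measure H) [νH.IsHaarMeasure]
    (ΔG : G → ℝ) (hΔG : IsModularFunction μG ΔG)
    (ΔK : K → ℝ) (hΔK : IsModularFunction νK ΔK)
    (ΔH : H → ℝ) (hΔH : IsModularFunction νH ΔH)
    (ρ : G → ℂ) (hρ : Continuous ρ) :
    (∀ (k : K) (h : H) (f : G → ℂ), Continuous f → HasCompactSupport f →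
        ∫ x, f ((k : G)⁻¹ * x * (h : G)⁻¹) * ρ x ∂μG
          = (ΔK k : ℂ) * (ΔH h : ℂ) * ∫ x, f x * ρ x ∂μG)
      ↔ (∀ (k : K) (h : H) (x : G),
          ρ ((k : G) * x * (h : G)) = ρ x * ((ΔK k * ΔH h / ΔG (h : G) : ℝ) : ℂ)) := by
  constructor
  · intro hyp k h x
    have hne : (ΔG (h : G) : ℂ) ≠ 0 :=
      Complex.ofReal_ne_zero.mpr (aux_modular_ne_zero μG ΔG hΔG (h : G))
    set c : ℂ := ((ΔK k * ΔH h / ΔG (h : G) : ℝ) : ℂ) with hc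
    have key : ∀ f : G → ℂ, Continuous f → HasCompactSupport f →
        ∫ x, f x * (ρ ((k : G) * x * (h : G)) - ρ x * c) ∂μG = 0 := by
      intro f hf hfc
      have h1 := aux_transform μG ΔG hΔG ρ hρ (k : G) (h : G) f hf hfc
      have h2 := hyp k h f hf hfc
      have hi1 : Integrable (fun x => f x * ρ ((k : G) * x * (h : G))) μG :=
        (hf.mul (hρ.comp ((continuous_mul_left _).mul continuous_const)))
          |>.integrable_of_hasCompactSupport hfc.mul_right
      have hi2 : Integrable (fun x => f x * ρ x) μG :=
        (hf.mul hρ).integrable_of_hasCompactSupport hfc.mul_right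
      have hi2' : Integrable (fun x => f x * (ρ x * c)) μG := by
        simpa [mul_assoc] using hi2.mul_const c
      rw [show (fun x => f x * (ρ ((k : G) * x * (h : G)) - ρ x * c))
          = fun x => f x * ρ ((k : G) * x * (h : G)) - f x * (ρ x * c) by
        funext x; ring]
      rw [integral_sub hi1 hi2']
      have h3 : ∫ x, f x * (ρ x * c) ∂μG = c * ∫ x, f x * ρ x ∂μG := by
        rw [← integral_const_mul]
        congr 1; funext x; ring
      rw [h3]
      -- from h1, h2: ΔG h * ∫ f ρ(kxh) = ΔK ΔH ∫ f ρ
      have h4 : (ΔG (h : G) : ℂ) * ∫ x, f x * ρ ((k : G) * x * (h : G)) ∂μG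
          = (ΔK k : ℂ) * (ΔH h : ℂ) * ∫ x, f x * ρ x ∂μG := by
        rw [← h1, h2]
      have hc' : (ΔG (h : G) : ℂ) * c = (ΔK k : ℂ) * (ΔH h : ℂ) := by
        rw [hc]
        push_cast
        rw [mul_comm, div_mul_cancel₀ _ hne]
      have h5 : (ΔG (h : G) : ℂ) * ((∫ x, f x * ρ ((k : G) * x * (h : G)) ∂μG)
          - c * ∫ x, f x * ρ x ∂μG) = 0 := by
        rw [mul_sub, h4, ← mul_assoc, hc', sub_self]
      exact (mul_eq_zero.mp h5).resolve_left hne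
    have := aux_vanish μG
      (fun x => ρ ((k : G) * x * (h : G)) - ρ x * c)
      (((hρ.comp ((continuous_mul_left _).mul continuous_const))).sub (hρ.mul continuous_const))
      key x
    exact sub_eq_zero.mp this
  · intro hyp k h f hf hfc
    have hne : (ΔG (h : G) : ℂ) ≠ 0 :=
      Complex.ofReal_ne_zero.mpr (aux_modular_ne_zero μG ΔG hΔG (h : G))
    rw [aux_transform μG ΔG hΔG ρ hρ (k : G) (h : G) f hf hfc]
    have : (fun x => f x * ρ ((k : G) * x * (h : G)))
        = fun x => f x * ρ x * ((ΔK k * ΔH h / ΔG (h : G) : ℝ) : ℂ) := by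
      funext x
      rw [hyp k h x]
      ring
    rw [this, integral_mul_const]
    have hc' : (ΔG (h : G) : ℂ) * ((ΔK k * ΔH h / ΔG (h : G) : ℝ) : ℂ)
        = (ΔK k : ℂ) * (ΔH h : ℂ) := by
      push_cast
      rw [mul_comm, div_mul_cancel₀ _ hne]
    linear_combination (∫ x, f x * ρ x ∂μG) * hc'
end
end

section
/- If K and H are compact subgroups of a locally compact group G, then there exists a G-invariant Radon measure on the double coset space K\G/H. -/
open MeasureTheory Topology
open scoped ENNReal

noncomputable section

instance dosetTopology {G : Type*} [Group G] [TopologicalSpace G] (A B : Set G) :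
    TopologicalSpace (DoubleCoset.Quotient A B) :=
  inferInstanceAs (TopologicalSpace (Quotient (DoubleCoset.setoid A B)))

instance dosetMeasurableSpace {G : Type*} [Group G] [MeasurableSpace G] (A B : Set G) :
    MeasurableSpace (DoubleCoset.Quotient A B) :=
  inferInstanceAs (MeasurableSpace (Quotient (DoubleCoset.setoid A B)))

section

variable {G : Type*} [Group G] [TopologicalSpace G] [IsTopologicalGroup G] [LocallyCompactSpace G]
  [MeasurableSpace G] [BorelSpace G] (K H : Subgroup G)

/-- The average of `f ∈ C_c(G)` over the double coset of the representative of `d`,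
i.e. `Qf(ẋ) = ∫_K ∫_H f(kxh) dk dh`. -/
def avg (νK : Measure K) (νH : Measure H) (f : G → ℝ)
    (d : DoubleCoset.Quotient (K : Set G) (H : Set G)) : ℝ :=
  ∫ k : K, ∫ h : H, f ((k : G) * d.out * (h : G)) ∂νH ∂νK

/-- `μ` is a `G`-invariant measure on `K\G/H`: the positive linear functional
`f ↦ ∫_{K\G/H} Qf dμ` on `C_c(G)` is invariant under left translations by `G`. -/
def IsGInvariant (νK : Measure K) (νH : Measure H)
    (μ : Measure (DoubleCoset.Quotient (K : Set G) (H : Set G))) : Prop :=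
  ∀ g : G, ∀ f : G → ℝ, Continuous f → HasCompactSupport f →
    ∫ d, avg K H νK νH (fun x => f (g * x)) d ∂μ = ∫ d, avg K H νK νH f d ∂μ

open scoped Pointwise

/-- Haar measure on a compact group which is a probability measure is right invariant. -/
lemma aux_isMulRightInvariant {X : Type*} [Group X] [TopologicalSpace X] [IsTopologicalGroup X]
    [CompactSpace X] [MeasurableSpace X] [BorelSpace X] (ν : Measure X) [ν.IsHaarMeasure]
    [IsProbabilityMeasure ν] : ν.IsMulRightInvariant := by
  constructor
  intro g
  haveI : IsProbabilityMeasure (Measure.map (· * g) ν) :=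
    Measure.isProbabilityMeasure_map (measurable_mul_const g).aemeasurable
  exact Measure.isHaarMeasure_eq_of_isProbabilityMeasure _ _

lemma aux_cont_integral {X Y : Type*} [TopologicalSpace X] [TopologicalSpace Y] [CompactSpace Y]
    [MeasurableSpace Y] [OpensMeasurableSpace Y] (μ : Measure Y) [IsFiniteMeasure μ]
    {g : X × Y → ℝ} (hg : Continuous g) : Continuous fun x => ∫ y, g (x, y) ∂μ := by
  have hI : LipschitzWith (μ Set.univ).toNNReal (fun φ : C(Y, ℝ) => ∫ y, φ y ∂μ) := by
    apply LipschitzWith.of_dist_le_mul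
    intro φ ψ
    have i1 : Integrable φ μ :=
      φ.continuous.integrable_of_hasCompactSupport (HasCompactSupport.of_compactSpace φ)
    have i2 : Integrable ψ μ :=
      ψ.continuous.integrable_of_hasCompactSupport (HasCompactSupport.of_compactSpace ψ)
    rw [dist_eq_norm, ← integral_sub i1 i2]
    calc ‖∫ y, (φ y - ψ y) ∂μ‖ ≤ dist φ ψ * (μ Set.univ).toReal :=
          norm_integral_le_of_norm_le_const
            (Filter.Eventually.of_forall fun y => by
              rw [← dist_eq_norm]; exact ContinuousMap.dist_apply_le_dist y)
      _ = (μ Set.univ).toNNReal * dist φ ψ := by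
          rw [mul_comm]; rfl
  exact hI.continuous.comp (ContinuousMap.curry ⟨g, hg⟩).continuous

instance dosetOpensMeasurableSpace {G : Type*} [Group G] [TopologicalSpace G] [MeasurableSpace G]
    [OpensMeasurableSpace G] (A B : Set G) : OpensMeasurableSpace (DoubleCoset.Quotient A B) := by
  constructor
  refine MeasurableSpace.generateFrom_le fun U hU => ?_
  have hc : Continuous (Quotient.mk'' : G → DoubleCoset.Quotient A B) := continuous_quot_mk
  exact measurableSet_quotient.mpr (hU.preimage hc).measurableSet

/-- If `K` and `H` are compact subgroups, then there is a `G`-invariant Radon measure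
on `K\G/H`. -/
theorem exists_invariant_measure_of_compact
    (hK : IsCompact (K : Set G)) (hH : IsCompact (H : Set G))
    (νK : Measure K) [νK.IsHaarMeasure] [IsProbabilityMeasure νK]
    (νH : Measure H) [νH.IsHaarMeasure] [IsProbabilityMeasure νH] :
    ∃ μ : Measure (DoubleCoset.Quotient (K : Set G) (H : Set G)),
      μ.Regular ∧ μ ≠ 0 ∧ IsGInvariant K H νK νH μ := by
  classical
  haveI : BorelSpace K := inferInstanceAs (BorelSpace (K : Set G))
  haveI : BorelSpace H := inferInstanceAs (BorelSpace (H : Set G))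
  haveI hKc : CompactSpace K := isCompact_iff_compactSpace.mp hK
  haveI hHc : CompactSpace H := isCompact_iff_compactSpace.mp hH
  haveI hνKr : νK.IsMulRightInvariant := aux_isMulRightInvariant νK
  set q : G → DoubleCoset.Quotient (K : Set G) (H : Set G) := DoubleCoset.mk K H with hqdef
  have qm : Measurable q := measurable_quotient_mk''
  have qcont : Continuous q := continuous_quot_mk
  have qqm : IsQuotientMap q := isQuotientMap_quot_mk
  have qout : ∀ d : DoubleCoset.Quotient (K : Set G) (H : Set G), q (Quotient.out d) = d :=
    fun d => DoubleCoset.out_eq' K H d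
  have qeq : ∀ {a b : G}, q a = q b ↔ ∃ k ∈ K, ∃ h ∈ H, b = k * a * h :=
    fun {a b} => DoubleCoset.eq K H a b
  -- saturation of sets
  have sat : ∀ S : Set G, q ⁻¹' (q '' S) = (K : Set G) * S * (H : Set G) := by
    intro S
    ext x
    simp only [Set.mem_preimage, Set.mem_image]
    constructor
    · rintro ⟨s, hs, hqs⟩
      obtain ⟨k, hk, h, hh, rfl⟩ := qeq.mp hqs
      exact Set.mul_mem_mul (Set.mul_mem_mul hk hs) hh
    · rintro hx
      obtain ⟨y, hy, h, hh, rfl⟩ := Set.mem_mul.mp hx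
      obtain ⟨k, hk, s, hs, rfl⟩ := Set.mem_mul.mp hy
      exact ⟨s, hs, qeq.mpr ⟨k, hk, h, hh, rfl⟩⟩
  have subset_sat : ∀ S : Set G, S ⊆ (K : Set G) * S * (H : Set G) := by
    intro S s hs
    simpa using Set.mul_mem_mul (Set.mul_mem_mul K.one_mem hs) H.one_mem
  -- compact saturated closed supersets of compact sets
  have satD : ∀ {S : Set G}, IsCompact S →
      ∃ D : Set G, IsCompact D ∧ MeasurableSet D ∧ S ⊆ D ∧ q ⁻¹' (q '' D) = D ∧
        ∀ {U : Set G}, IsOpen U → q ⁻¹' (q '' U) ⊆ U → S ⊆ U → D ⊆ U := by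
    intro S hS
    have hT : IsCompact ((K : Set G) * S * (H : Set G)) := (hK.mul hS).mul hH
    refine ⟨closure ((K : Set G) * S * (H : Set G)), hT.closure, isClosed_closure.measurableSet,
      (subset_sat S).trans subset_closure, ?_, ?_⟩
    · rw [sat]
      apply Set.Subset.antisymm
      · intro x hx
        obtain ⟨y, hy, h, hh, rfl⟩ := Set.mem_mul.mp hx
        obtain ⟨k, hk, c, hc, rfl⟩ := Set.mem_mul.mp hy
        have himg : (fun z => k * z * h) '' closure ((K : Set G) * S * (H : Set G)) ⊆
            closure ((K : Set G) * S * (H : Set G)) := by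
          have : (fun z => k * z * h) =
              ⇑((Homeomorph.mulLeft k).trans (Homeomorph.mulRight h)) := rfl
          rw [this, Homeomorph.image_closure]
          apply closure_mono
          rintro w ⟨t, ht, rfl⟩
          obtain ⟨y', hy', h', hh', rfl⟩ := Set.mem_mul.mp ht
          obtain ⟨k', hk', s', hs', rfl⟩ := Set.mem_mul.mp hy'
          show k * (k' * s' * h') * h ∈ _
          have he : k * (k' * s' * h') * h = (k * k') * s' * (h' * h) := by group
          rw [he]
          exact Set.mul_mem_mul (Set.mul_mem_mul (mul_mem hk hk') hs') (mul_mem hh' hh)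
        exact himg ⟨c, hc, rfl⟩
      · exact subset_sat _
    · intro U hU hUsat hSU
      have h1 : (K : Set G) * S * (H : Set G) ⊆ U := by
        rw [← sat]
        exact (Set.preimage_mono (Set.image_mono (f := q) hSU)).trans hUsat
      exact hT.closure_subset_of_isOpen hU h1
  have qimg_meas : ∀ {S : Set G}, MeasurableSet (q ⁻¹' (q '' S)) → MeasurableSet (q '' S) :=
    fun h => measurableSet_quotient.mpr h
  have map_meas : ∀ {s : Set (DoubleCoset.Quotient (K : Set G) (H : Set G))}, MeasurableSet s →
      Measure.map q Measure.haar s = Measure.haar (q ⁻¹' s) := fun hs => Measure.map_apply qm hs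
  refine ⟨Measure.map q Measure.haar, ?_, ?_, ?_⟩
  · -- Regular
    haveI hfin : IsFiniteMeasureOnCompacts (Measure.map q Measure.haar) := by
      constructor
      intro s hs
      obtain ⟨S, hScomp, hsS⟩ : ∃ S : Set G, IsCompact S ∧ s ⊆ q '' S := by
        have hV : ∀ d : DoubleCoset.Quotient (K : Set G) (H : Set G),
            ∃ V : Set G, IsCompact V ∧ V ∈ 𝓝 (Quotient.out d) :=
          fun d => exists_compact_mem_nhds (Quotient.out d)
        choose V hVc hVn using hV
        have hU : ∀ d ∈ s, q '' interior (V d) ∈ 𝓝 d := by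
          intro d _
          have hopen : IsOpen (q '' interior (V d)) := by
            rw [← qqm.isOpen_preimage, sat]
            exact (isOpen_interior.mul_left).mul_right
          refine hopen.mem_nhds ?_
          exact ⟨Quotient.out d, mem_interior_iff_mem_nhds.mpr (hVn d), qout d⟩
        obtain ⟨t, _, hts⟩ := hs.elim_nhds_subcover (fun d => q '' interior (V d)) hU
        refine ⟨⋃ d ∈ t, V d, t.isCompact_biUnion fun d _ => hVc d, ?_⟩
        refine hts.trans ?_
        intro x hx
        simp only [Set.mem_iUnion] at hx ⊢
        obtain ⟨d, hd, hx⟩ := hx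
        obtain ⟨y, hy, rfl⟩ := hx
        exact ⟨y, Set.mem_iUnion₂.mpr ⟨d, hd, interior_subset hy⟩, rfl⟩
      obtain ⟨D, hDcomp, hDmeas, hSD, hDsat, _⟩ := satD hScomp
      have hmeas : MeasurableSet (q '' D) := qimg_meas (hDsat.symm ▸ hDmeas)
      calc Measure.map q Measure.haar s ≤ Measure.map q Measure.haar (q '' D) :=
            measure_mono (hsS.trans (Set.image_mono (f := q) hSD))
        _ = Measure.haar D := by rw [map_meas hmeas, hDsat]
        _ < ∞ := hDcomp.measure_lt_top
    haveI houter : (Measure.map q Measure.haar).OuterRegular := by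
      constructor
      intro A hA r hr
      rw [map_meas hA] at hr
      obtain ⟨U, hUsub, hUopen, hUlt⟩ :=
        Set.exists_isOpen_lt_of_lt (μ := (Measure.haar : Measure G)) (q ⁻¹' A) r hr
      set W := {x : G | ∀ k ∈ (K : Set G), ∀ h ∈ (H : Set G), k * x * h ∈ U} with hW
      have hWU : W ⊆ U := fun x hx => by simpa using hx 1 K.one_mem 1 H.one_mem
      have hAW : q ⁻¹' A ⊆ W := by
        intro x hx k hk h hh
        apply hUsub
        have he : q x = q (k * x * h) := qeq.mpr ⟨k, hk, h, hh, rfl⟩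
        show q (k * x * h) ∈ A
        rw [← he]
        exact hx
      have hWopen : IsOpen W := by
        rw [isOpen_iff_forall_mem_open]
        intro x hx
        have hcont : Continuous (fun p : (G × G) × G => p.1.1 * p.2 * p.1.2) := by fun_prop
        have hpre : IsOpen ((fun p : (G × G) × G => p.1.1 * p.2 * p.1.2) ⁻¹' U) :=
          hUopen.preimage hcont
        have hsub : ((K : Set G) ×ˢ (H : Set G)) ×ˢ ({x} : Set G) ⊆
            (fun p : (G × G) × G => p.1.1 * p.2 * p.1.2) ⁻¹' U := by
          rintro ⟨⟨k, h⟩, y⟩ ⟨⟨hk, hh⟩, hy⟩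
          rcases hy with rfl
          exact hx k hk h hh
        obtain ⟨u, v, _, hv, hKHu, hxv, huv⟩ :=
          generalized_tube_lemma (hK.prod hH) isCompact_singleton hpre hsub
        refine ⟨v, ?_, hv, hxv rfl⟩
        intro y hy k hk h hh
        exact huv (Set.mk_mem_prod (hKHu (Set.mk_mem_prod hk hh)) hy)
      have hWsat : q ⁻¹' (q '' W) = W := by
        apply Set.Subset.antisymm
        · intro x hx
          obtain ⟨w, hw, hqw⟩ := hx
          obtain ⟨k0, hk0, h0, hh0, rfl⟩ := qeq.mp hqw
          intro k hk h hh
          have he : k * (k0 * w * h0) * h = (k * k0) * w * (h0 * h) := by group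
          rw [he]
          exact hw _ (mul_mem hk hk0) _ (mul_mem hh0 hh)
        · exact Set.subset_preimage_image q W
      have hWmeas_img : MeasurableSet (q '' W) := qimg_meas (hWsat.symm ▸ hWopen.measurableSet)
      have hWopen_img : IsOpen (q '' W) := qqm.isOpen_preimage.mp (hWsat.symm ▸ hWopen)
      refine ⟨q '' W, ?_, hWopen_img, ?_⟩
      · intro a ha
        exact ⟨Quotient.out a, hAW (by rw [Set.mem_preimage, qout]; exact ha), qout a⟩
      · rw [map_meas hWmeas_img, hWsat]
        exact lt_of_le_of_lt (measure_mono hWU) hUlt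
    refine ⟨?_⟩
    intro O hO r hr
    rw [map_meas hO.measurableSet] at hr
    have hO' : IsOpen (q ⁻¹' O) := hO.preimage qcont
    obtain ⟨C, hCsub, hCcomp, hCr⟩ :=
      (Measure.Regular.innerRegular (μ := (Measure.haar : Measure G))) hO' r hr
    obtain ⟨D, hDcomp, hDmeas, hCD, hDsat, hDmin⟩ := satD hCcomp
    have hDO : D ⊆ q ⁻¹' O :=
      hDmin hO' (Set.preimage_mono (Set.image_preimage_subset q O)) hCsub
    refine ⟨q '' D, ?_, hDcomp.image qcont, ?_⟩
    · rintro y ⟨x, hx, rfl⟩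
      exact hDO hx
    · rw [map_meas (qimg_meas (hDsat.symm ▸ hDmeas)), hDsat]
      exact lt_of_lt_of_le hCr (measure_mono hCD)
  · -- nonzero
    rw [← Measure.measure_univ_ne_zero, Measure.map_apply qm MeasurableSet.univ, Set.preimage_univ]
    exact isOpen_univ.measure_ne_zero Measure.haar Set.univ_nonempty
  · -- invariance
    have key : ∀ f : G → ℝ, Continuous f → HasCompactSupport f →
        ∫ d, avg K H νK νH f d ∂(Measure.map q Measure.haar) =
          ∫ k : K, ∫ h : H, ∫ x, f (x * (h : G)) ∂Measure.haar ∂νH ∂νK := by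
      intro f hf hfc
      obtain ⟨C, hC⟩ := hfc.exists_bound_of_continuous hf
      set T : Set G := (K : Set G) * tsupport f * (H : Set G) with hT
      have hTcomp : IsCompact T := (hK.mul hfc).mul hH
      have hvanish : ∀ x, x ∉ T → ∀ (k : K) (h : H), f ((k : G) * x * (h : G)) = 0 := by
        intro x hx k h
        by_contra hne
        apply hx
        have hmem : (k : G) * x * (h : G) ∈ tsupport f := subset_tsupport f hne
        have he : x = (k : G)⁻¹ * ((k : G) * x * (h : G)) * (h : G)⁻¹ := by group
        rw [he]
        exact Set.mul_mem_mul (Set.mul_mem_mul (K.inv_mem k.2) hmem) (H.inv_mem h.2)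
      set φ : G → K → ℝ := fun x k => ∫ h : H, f ((k : G) * x * (h : G)) ∂νH with hφ
      have φcont : Continuous (Function.uncurry φ) := by
        have hg : Continuous fun pq : (G × K) × H => f ((pq.1.2 : G) * pq.1.1 * (pq.2 : G)) := by
          fun_prop
        exact aux_cont_integral νH hg
      have φzero : ∀ x, x ∉ T → ∀ k : K, φ x k = 0 := by
        intro x hx k
        rw [hφ]
        simp only
        rw [show (fun h : H => f ((k : G) * x * (h : G))) = fun _ => (0 : ℝ) from
          funext fun h => hvanish x hx k h]
        simp
      have φsupp : HasCompactSupport (Function.uncurry φ) := by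
        apply HasCompactSupport.of_support_subset_isCompact (hTcomp.prod isCompact_univ)
        rw [Function.support_subset_iff']
        rintro ⟨x, k⟩ hxk
        have hx : x ∉ T := fun hmem => hxk ⟨hmem, Set.mem_univ k⟩
        exact φzero x hx k
      set F : G → ℝ := fun x => ∫ k : K, φ x k ∂νK with hF
      have Fcont : Continuous F := aux_cont_integral νK φcont
      have Fzero : ∀ x, x ∉ T → F x = 0 := by
        intro x hx
        rw [hF]
        simp only
        rw [show (fun k : K => φ x k) = fun _ => (0 : ℝ) from funext fun k => φzero x hx k]
        simp
      have Fsupp : HasCompactSupport F := by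
        apply HasCompactSupport.of_support_subset_isCompact hTcomp
        rw [Function.support_subset_iff']
        exact Fzero
      -- F is invariant under the double coset relation
      have hFinv : ∀ (x k0 h0 : G), k0 ∈ K → h0 ∈ H → F (k0 * x * h0) = F x := by
        intro x k0 h0 hk0 hh0
        have inner_eq : ∀ k : K, φ (k0 * x * h0) k = φ x (k * ⟨k0, hk0⟩) := by
          intro k
          have step1 : ∀ h : H,
              f ((k : G) * (k0 * x * h0) * (h : G)) =
                (fun h' : H => f (((k : G) * k0) * x * (h' : G))) ((⟨h0, hh0⟩ : H) * h) := by
            intro h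
            show f ((k : G) * (k0 * x * h0) * (h : G)) =
              f (((k : G) * k0) * x * (h0 * (h : G)))
            congr 1
            group
          calc φ (k0 * x * h0) k
              = ∫ h : H, (fun h' : H => f (((k : G) * k0) * x * (h' : G)))
                  ((⟨h0, hh0⟩ : H) * h) ∂νH :=
                integral_congr_ae (Filter.Eventually.of_forall fun h => step1 h)
            _ = ∫ h : H, f (((k : G) * k0) * x * (h : G)) ∂νH :=
                integral_mul_left_eq_self
                  (fun h' : H => f (((k : G) * k0) * x * (h' : G))) (⟨h0, hh0⟩ : H)
            _ = φ x (k * ⟨k0, hk0⟩) := rfl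
        calc F (k0 * x * h0) = ∫ k : K, φ x (k * ⟨k0, hk0⟩) ∂νK :=
              integral_congr_ae (Filter.Eventually.of_forall inner_eq)
          _ = ∫ k : K, φ x k ∂νK :=
              integral_mul_right_eq_self (fun k : K => φ x k) (⟨k0, hk0⟩ : K)
          _ = F x := rfl
      have hFconst : ∀ a b : G, q a = q b → F a = F b := by
        intro a b hab
        obtain ⟨k0, hk0, h0, hh0, rfl⟩ := qeq.mp hab
        exact (hFinv a k0 h0 hk0 hh0).symm
      have havg : ∀ x : G, avg K H νK νH f (q x) = F x := by
        intro x
        exact hFconst (Quotient.out (q x)) x (qout (q x))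
      have havgcont : Continuous (avg K H νK νH f) := by
        rw [qqm.continuous_iff]
        have : avg K H νK νH f ∘ q = F := funext havg
        rw [this]
        exact Fcont
      rw [integral_map qm.aemeasurable havgcont.aestronglyMeasurable]
      have : (fun x => avg K H νK νH f (q x)) = F := funext havg
      rw [this]
      -- Fubini: swap G and K
      have swap1 : ∫ x, F x ∂Measure.haar = ∫ k : K, ∫ x, φ x k ∂Measure.haar ∂νK :=
        integral_integral_swap_of_hasCompactSupport φcont φsupp
      rw [swap1]
      refine integral_congr_ae (Filter.Eventually.of_forall fun k => ?_)
      show (∫ x, φ x k ∂Measure.haar) =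
        ∫ h : H, ∫ x, f (x * (h : G)) ∂Measure.haar ∂νH
      -- swap G and H
      have hkcont : Continuous (Function.uncurry fun x (h : H) => f ((k : G) * x * (h : G))) := by
        fun_prop
      have hksupp : HasCompactSupport
          (Function.uncurry fun x (h : H) => f ((k : G) * x * (h : G))) := by
        apply HasCompactSupport.of_support_subset_isCompact (hTcomp.prod isCompact_univ)
        rw [Function.support_subset_iff']
        rintro ⟨x, h⟩ hxh
        have hx : x ∉ T := fun hmem => hxh ⟨hmem, Set.mem_univ h⟩
        exact hvanish x hx k h
      have swap2 : ∫ x, φ x k ∂Measure.haar =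
          ∫ h : H, ∫ x, f ((k : G) * x * (h : G)) ∂Measure.haar ∂νH :=
        integral_integral_swap_of_hasCompactSupport hkcont hksupp
      rw [swap2]
      refine integral_congr_ae (Filter.Eventually.of_forall fun h => ?_)
      show (∫ x, f ((k : G) * x * (h : G)) ∂Measure.haar) = ∫ x, f (x * (h : G)) ∂Measure.haar
      exact integral_mul_left_eq_self (fun y => f (y * (h : G))) (k : G)
    intro g f hf hfc
    have hf' : Continuous fun x => f (g * x) := hf.comp (continuous_const.mul continuous_id)
    have hfc' : HasCompactSupport fun x => f (g * x) :=
      hfc.comp_homeomorph (Homeomorph.mulLeft g)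
    rw [key _ hf' hfc', key f hf hfc]
    refine integral_congr_ae (Filter.Eventually.of_forall fun k => ?_)
    show (∫ h : H, ∫ x, f (g * (x * (h : G))) ∂Measure.haar ∂νH) =
      ∫ h : H, ∫ x, f (x * (h : G)) ∂Measure.haar ∂νH
    refine integral_congr_ae (Filter.Eventually.of_forall fun h => ?_)
    show (∫ x, f (g * (x * (h : G))) ∂Measure.haar) = ∫ x, f (x * (h : G)) ∂Measure.haar
    have := integral_mul_left_eq_self (μ := (Measure.haar : Measure G))
      (fun y => f (y * (h : G))) g
    simpa only [mul_assoc] using this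

end
end
end
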